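/- For 0 < r₁ < r₂ < 1, the subexponential rates satisfy u_{r₁} ≪ u_{r₂}: for all α, α̃ < 0 there exists M ≥ 1 such that (u_{r₂}(t)/u_{r₂}(s))^α ≤ M (u_{r₁}(t)/u_{r₁}(s))^{α̃} for all t ≥ s, where u_r(t) = exp(sgn(t)((|t|+1)^r − 1)). -/

import Mathlib

noncomputable def subexpRate (r : ℝ) (t : ℝ) : ℝ := Real.exp (Real.sign t * ((|t| + 1) ^ r - 1))

/-- Real subadditivity of rpow for exponents in [0,1]. -/
lemma real_rpow_add_le_add_rpow {x y p : ℝ} (hx : 0 ≤ x) (hy : 0 ≤ y)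
    (hp : 0 ≤ p) (hp1 : p ≤ 1) : (x + y) ^ p ≤ x ^ p + y ^ p := by
  have h := NNReal.rpow_add_le_add_rpow x.toNNReal y.toNNReal hp hp1
  have := NNReal.coe_le_coe.2 h
  push_cast [NNReal.coe_rpow] at this
  rwa [Real.coe_toNNReal x hx, Real.coe_toNNReal y hy] at this

/-- Key inequality on the nonnegative side:
`(b+1)^{r₁} - (a+1)^{r₁} ≤ ((b+1)^{r₂} - (a+1)^{r₂})^{r₁/r₂}` for `0 ≤ a ≤ b`. -/
lemma pos_side_gap {r₁ r₂ a b : ℝ} (h0 : 0 < r₁) (h12 : r₁ < r₂)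
    (ha : 0 ≤ a) (hab : a ≤ b) :
    (b + 1) ^ r₁ - (a + 1) ^ r₁ ≤ ((b + 1) ^ r₂ - (a + 1) ^ r₂) ^ (r₁ / r₂) := by
  have hr2 : 0 < r₂ := h0.trans h12
  set ρ : ℝ := r₁ / r₂ with hρ
  have hρ0 : 0 ≤ ρ := le_of_lt (div_pos h0 hr2)
  have hρ1 : ρ ≤ 1 := le_of_lt ((div_lt_one hr2).2 h12)
  have ha1 : (0:ℝ) ≤ a + 1 := by linarith
  have hb1 : (0:ℝ) ≤ b + 1 := by linarith
  have hu : (a + 1) ^ r₂ ≤ (b + 1) ^ r₂ :=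
    Real.rpow_le_rpow ha1 (by linarith) hr2.le
  set u := (a + 1) ^ r₂
  set v := (b + 1) ^ r₂
  have hu0 : 0 ≤ u := Real.rpow_nonneg ha1 _
  have key : v ^ ρ ≤ u ^ ρ + (v - u) ^ ρ := by
    have := real_rpow_add_le_add_rpow hu0 (sub_nonneg.2 hu) hρ0 hρ1
    rwa [add_sub_cancel] at this
  have hvρ : v ^ ρ = (b + 1) ^ r₁ := by
    show ((b + 1) ^ r₂) ^ ρ = (b + 1) ^ r₁
    rw [← Real.rpow_mul hb1]
    congr 1
    rw [hρ]; field_simp [hr2.ne']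
  have huρ : u ^ ρ = (a + 1) ^ r₁ := by
    show ((a + 1) ^ r₂) ^ ρ = (a + 1) ^ r₁
    rw [← Real.rpow_mul ha1]
    congr 1
    rw [hρ]; field_simp [hr2.ne']
  rw [hvρ, huρ] at key
  linarith

/-- The "sign" function used in `subexpRate`, written without `Real.sign`. -/
lemma F_eval (r t : ℝ) :
    Real.sign t * ((|t| + 1) ^ r - 1) =
      if 0 ≤ t then (t + 1) ^ r - 1 else 1 - (-t + 1) ^ r := by
  rcases lt_trichotomy t 0 with ht | ht | ht
  · rw [Real.sign_of_neg ht, abs_of_neg ht, if_neg (not_le.2 ht)]; ring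
  · simp [ht]
  · rw [Real.sign_of_pos ht, abs_of_pos ht, if_pos ht.le]; ring

/-- Monotonicity of the exponent function. -/
lemma F_mono {r s t : ℝ} (hr : 0 < r) (hst : s ≤ t) :
    Real.sign s * ((|s| + 1) ^ r - 1) ≤ Real.sign t * ((|t| + 1) ^ r - 1) := by
  rw [F_eval, F_eval]
  have key : ∀ x y : ℝ, 0 ≤ x → x ≤ y → (x + 1) ^ r ≤ (y + 1) ^ r := fun x y hx hxy =>
    Real.rpow_le_rpow (by linarith) (by linarith) hr.le
  have one_le : ∀ x : ℝ, 0 ≤ x → (1:ℝ) ≤ (x + 1) ^ r := fun x hx => by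
    have := Real.one_le_rpow (x := x + 1) (by linarith) hr.le
    simpa using this
  split_ifs with h1 h2 h2
  · have := key s t h1 hst; linarith
  · exact absurd (le_trans h1 hst) h2
  · have h1' := one_le t h2
    have h2' := one_le (-s) (by linarith [not_le.1 h1])
    linarith
  · have := key (-t) (-s) (by linarith [not_le.1 h2]) (by linarith); linarith

/-- The central gap comparison. -/
lemma gap_le {r₁ r₂ s t : ℝ} (h0 : 0 < r₁) (h12 : r₁ < r₂) (hst : s ≤ t) :
    Real.sign t * ((|t| + 1) ^ r₁ - 1) - Real.sign s * ((|s| + 1) ^ r₁ - 1) ≤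
      2 * (Real.sign t * ((|t| + 1) ^ r₂ - 1) - Real.sign s * ((|s| + 1) ^ r₂ - 1)) ^ (r₁ / r₂) := by
  have hr2 : 0 < r₂ := h0.trans h12
  have hρ0 : 0 < r₁ / r₂ := div_pos h0 hr2
  set ρ := r₁ / r₂
  rw [F_eval, F_eval, F_eval, F_eval]
  have hgap2 : 0 ≤ Real.sign t * ((|t| + 1) ^ r₂ - 1) - Real.sign s * ((|s| + 1) ^ r₂ - 1) := by
    have := F_mono hr2 hst; linarith
  rw [F_eval, F_eval] at hgap2
  split_ifs with h1 h2 h2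
  · -- 0 ≤ s ≤ t
    have key := pos_side_gap h0 h12 h2 hst
    have hnn : (0:ℝ) ≤ ((t + 1) ^ r₂ - (s + 1) ^ r₂) ^ ρ := Real.rpow_nonneg (by
      have : (s + 1) ^ r₂ ≤ (t + 1) ^ r₂ :=
        Real.rpow_le_rpow (by linarith) (by linarith) hr2.le
      linarith) _
    calc (t + 1) ^ r₁ - 1 - ((s + 1) ^ r₁ - 1)
        = (t + 1) ^ r₁ - (s + 1) ^ r₁ := by ring
      _ ≤ ((t + 1) ^ r₂ - (s + 1) ^ r₂) ^ ρ := key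
      _ ≤ 2 * ((t + 1) ^ r₂ - 1 - ((s + 1) ^ r₂ - 1)) ^ ρ := by
          rw [show (t + 1) ^ r₂ - 1 - ((s + 1) ^ r₂ - 1) = (t + 1) ^ r₂ - (s + 1) ^ r₂ by ring]
          linarith
  · -- s < 0 ≤ t : split at 0
    have hs' : (0:ℝ) < -s := by linarith [not_le.1 h2]
    have keyt := pos_side_gap h0 h12 (le_refl (0:ℝ)) h1
    have keys := pos_side_gap h0 h12 (le_refl (0:ℝ)) hs'.le
    rw [show ((0:ℝ) + 1) = 1 by ring] at keyt keys
    rw [Real.one_rpow, Real.one_rpow] at keyt keys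
    have h1t : (1:ℝ) ≤ (t + 1) ^ r₂ := by
      simpa using Real.one_le_rpow (x := t + 1) (by linarith) hr2.le
    have h1s : (1:ℝ) ≤ (-s + 1) ^ r₂ := by
      simpa using Real.one_le_rpow (x := -s + 1) (by linarith) hr2.le
    have hmt : ((t + 1) ^ r₂ - 1) ^ ρ ≤
        ((t + 1) ^ r₂ - 1 - (1 - (-s + 1) ^ r₂)) ^ ρ := by
      apply Real.rpow_le_rpow (by linarith) (by linarith) hρ0.le
    have hms : ((-s + 1) ^ r₂ - 1) ^ ρ ≤
        ((t + 1) ^ r₂ - 1 - (1 - (-s + 1) ^ r₂)) ^ ρ := by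
      apply Real.rpow_le_rpow (by linarith) (by linarith) hρ0.le
    have : (t + 1) ^ r₁ - 1 - (1 - (-s + 1) ^ r₁)
        = ((t + 1) ^ r₁ - 1) + ((-s + 1) ^ r₁ - 1) := by ring
    rw [this]
    calc ((t + 1) ^ r₁ - 1) + ((-s + 1) ^ r₁ - 1)
        ≤ ((t + 1) ^ r₂ - 1) ^ ρ + ((-s + 1) ^ r₂ - 1) ^ ρ := by linarith
      _ ≤ 2 * ((t + 1) ^ r₂ - 1 - (1 - (-s + 1) ^ r₂)) ^ ρ := by linarith
  · exact absurd (le_trans h2 hst) h1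
  · -- s ≤ t < 0
    have ht' : (0:ℝ) < -t := by linarith [not_le.1 h1]
    have key := pos_side_gap h0 h12 ht'.le (show -t ≤ -s by linarith)
    have hnn : (0:ℝ) ≤ ((-s + 1) ^ r₂ - (-t + 1) ^ r₂) ^ ρ := Real.rpow_nonneg (by
      have : (-t + 1) ^ r₂ ≤ (-s + 1) ^ r₂ :=
        Real.rpow_le_rpow (by linarith) (by linarith) hr2.le
      linarith) _
    calc 1 - (-t + 1) ^ r₁ - (1 - (-s + 1) ^ r₁)
        = (-s + 1) ^ r₁ - (-t + 1) ^ r₁ := by ring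
      _ ≤ ((-s + 1) ^ r₂ - (-t + 1) ^ r₂) ^ ρ := key
      _ ≤ 2 * (1 - (-t + 1) ^ r₂ - (1 - (-s + 1) ^ r₂)) ^ ρ := by
          rw [show 1 - (-t + 1) ^ r₂ - (1 - (-s + 1) ^ r₂)
              = (-s + 1) ^ r₂ - (-t + 1) ^ r₂ by ring]
          linarith

/-- Sublinearity of `z ^ ρ`: `b * z ^ ρ ≤ K + c * z` for a suitable constant. -/
lemma sublinear {ρ b c : ℝ} (hρ0 : 0 < ρ) (hρ1 : ρ < 1) (hb : 0 < b) (hc : 0 < c) :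
    ∃ K : ℝ, 0 ≤ K ∧ ∀ z : ℝ, 0 ≤ z → b * z ^ ρ ≤ K + c * z := by
  set x₀ : ℝ := max 1 ((b / c) ^ (1 / (1 - ρ))) with hx₀
  have hx₀1 : (1:ℝ) ≤ x₀ := le_max_left _ _
  have hx₀0 : (0:ℝ) < x₀ := lt_of_lt_of_le one_pos hx₀1
  refine ⟨b * x₀ ^ ρ, by positivity, fun z hz => ?_⟩
  rcases le_total z x₀ with h | h
  · have : z ^ ρ ≤ x₀ ^ ρ := Real.rpow_le_rpow hz h hρ0.le
    nlinarith [Real.rpow_nonneg hz ρ, mul_nonneg hc.le hz]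
  · -- z ≥ x₀ : b * z^ρ ≤ c * z
    have hz0 : 0 < z := lt_of_lt_of_le hx₀0 h
    have hkey : b * x₀ ^ (ρ - 1) ≤ c := by
      have hbc : (b / c) ^ (1 / (1 - ρ)) ≤ x₀ := le_max_right _ _
      have h1ρ : (0:ℝ) < 1 - ρ := by linarith
      have : b / c ≤ x₀ ^ (1 - ρ) := by
        rcases le_total (b / c) 0 with hbc0 | hbc0
        · exact le_trans hbc0 (Real.rpow_nonneg hx₀0.le _)
        · calc b / c = ((b / c) ^ (1 / (1 - ρ))) ^ (1 - ρ) := by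
                rw [← Real.rpow_mul hbc0, one_div_mul_cancel (ne_of_gt h1ρ), Real.rpow_one]
            _ ≤ x₀ ^ (1 - ρ) := Real.rpow_le_rpow (Real.rpow_nonneg hbc0 _) hbc h1ρ.le
      have hx : x₀ ^ (ρ - 1) = (x₀ ^ (1 - ρ))⁻¹ := by
        rw [show ρ - 1 = -(1 - ρ) by ring, Real.rpow_neg hx₀0.le]
      rw [hx]
      rw [div_le_iff₀ hc] at this
      have hpos : 0 < x₀ ^ (1 - ρ) := Real.rpow_pos_of_pos hx₀0 _
      rw [mul_inv_le_iff₀ hpos]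
      nlinarith
    have hmono : z ^ (ρ - 1) ≤ x₀ ^ (ρ - 1) :=
      Real.rpow_le_rpow_of_nonpos hx₀0 h (by linarith)
    have hzz : z ^ ρ = z ^ (ρ - 1) * z := by
      rw [← Real.rpow_add_one (ne_of_gt hz0)]; ring_nf
    have : b * z ^ ρ ≤ c * z := by
      rw [hzz]
      calc b * (z ^ (ρ - 1) * z) = (b * z ^ (ρ - 1)) * z := by ring
        _ ≤ (b * x₀ ^ (ρ - 1)) * z := by
            apply mul_le_mul_of_nonneg_right _ hz0.le
            exact mul_le_mul_of_nonneg_left hmono hb.le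
        _ ≤ c * z := mul_le_mul_of_nonneg_right hkey hz0.le
    nlinarith [Real.rpow_nonneg hx₀0.le ρ]

/-- For 0 < r₁ < r₂ < 1 the subexponential rates satisfy u_{r₁} ≪ u_{r₂}. -/
theorem subexp_slower (r₁ r₂ : ℝ) (h0 : 0 < r₁) (h12 : r₁ < r₂) (h1 : r₂ < 1) :
    ∀ α α' : ℝ, α < 0 → α' < 0 → ∃ M : ℝ, 1 ≤ M ∧
      ∀ t s : ℝ, s ≤ t →
        (subexpRate r₂ t / subexpRate r₂ s) ^ α ≤
          M * (subexpRate r₁ t / subexpRate r₁ s) ^ α' := by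
  intro α α' hα hα'
  have hr2 : 0 < r₂ := h0.trans h12
  have hρ0 : 0 < r₁ / r₂ := div_pos h0 hr2
  have hρ1 : r₁ / r₂ < 1 := (div_lt_one hr2).2 h12
  obtain ⟨K, hK0, hK⟩ := sublinear hρ0 hρ1 (show (0:ℝ) < 2 * (-α') by linarith)
    (show (0:ℝ) < -α by linarith)
  refine ⟨Real.exp K, Real.one_le_exp hK0, fun t s hst => ?_⟩
  set F : ℝ → ℝ → ℝ := fun r x => Real.sign x * ((|x| + 1) ^ r - 1) with hF
  have hratio : ∀ r, subexpRate r t / subexpRate r s = Real.exp (F r t - F r s) := by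
    intro r; rw [subexpRate, subexpRate, ← Real.exp_sub]
  have hrpow : ∀ (x y : ℝ), (Real.exp x) ^ y = Real.exp (x * y) := fun x y =>
    (Real.exp_mul x y).symm
  rw [hratio, hratio, hrpow, hrpow, ← Real.exp_add]
  apply Real.exp_le_exp.2
  set g₁ := F r₁ t - F r₁ s
  set g₂ := F r₂ t - F r₂ s
  have hg₂0 : 0 ≤ g₂ := by
    have := F_mono hr2 hst; simp only [hF, g₂]; linarith
  have hgap : g₁ ≤ 2 * g₂ ^ (r₁ / r₂) := gap_le h0 h12 hst
  have hsub := hK g₂ hg₂0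
  have h1' : (-α') * g₁ ≤ (-α') * (2 * g₂ ^ (r₁ / r₂)) :=
    mul_le_mul_of_nonneg_left hgap (by linarith)
  ring_nf at h1' hsub ⊢
  linarith
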